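/- In a real normed vector space, two ellipses that coincide in at least 5 points are equal. Here an ellipse is a set {a + cos(α)v₁ + sin(α)v₂ : α ∈ [0,2π]} with v₁, v₂ linearly independent. -/

import Mathlib

open Polynomial

/-- A "trig polynomial of degree 2" vanishing at 5 distinct points of the unit circle
is identically zero (all coefficients vanish). -/
lemma trig5 (c₀ c₁ c₂ c₃ c₄ : ℝ) (p : Fin 5 → ℝ × ℝ)
    (hcirc : ∀ j, (p j).1 ^ 2 + (p j).2 ^ 2 = 1)
    (hinj : Function.Injective p)
    (hz : ∀ j, c₀ + c₁ * (p j).1 + c₂ * (p j).2 + c₃ * ((p j).1 ^ 2 - (p j).2 ^ 2)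
      + c₄ * ((p j).1 * (p j).2) = 0) :
    c₀ = 0 ∧ c₁ = 0 ∧ c₂ = 0 ∧ c₃ = 0 ∧ c₄ = 0 := by
  set P : ℂ[X] := C ((c₃ : ℂ) / 2 + (c₄ : ℂ) / 4 * Complex.I)
      + C ((c₁ : ℂ) / 2 + (c₂ : ℂ) / 2 * Complex.I) * X
      + C ((c₀ : ℝ) : ℂ) * X ^ 2
      + C ((c₁ : ℂ) / 2 - (c₂ : ℂ) / 2 * Complex.I) * X ^ 3
      + C ((c₃ : ℂ) / 2 - (c₄ : ℂ) / 4 * Complex.I) * X ^ 4 with hP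
  set z : Fin 5 → ℂ := fun j => ((p j).1 : ℂ) + ((p j).2 : ℂ) * Complex.I with hzdef
  have hzinj : Function.Injective z := by
    intro j k h
    apply hinj
    have hre := congrArg Complex.re h
    have him := congrArg Complex.im h
    simp [z] at hre him
    exact Prod.ext hre him
  have heval : ∀ j, P.eval (z j) = 0 := by
    intro j
    have h1 : ((p j).1 : ℂ) ^ 2 + ((p j).2 : ℂ) ^ 2 = 1 := by exact_mod_cast hcirc j
    have h2 : ((c₀ : ℂ)) + c₁ * (p j).1 + c₂ * (p j).2
        + c₃ * (((p j).1 : ℂ) ^ 2 - ((p j).2 : ℂ) ^ 2)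
        + c₄ * (((p j).1 : ℂ) * ((p j).2 : ℂ)) = 0 := by exact_mod_cast hz j
    simp only [hP, eval_add, eval_mul, eval_pow, eval_C, eval_X, hzdef]
    set c : ℂ := ((p j).1 : ℂ)
    set s : ℂ := ((p j).2 : ℂ)
    linear_combination (c + s * Complex.I) ^ 2 * h2
      + (-(((c₁ : ℂ)/2 + (c₂ : ℂ)/2 * Complex.I)) * (c + s * Complex.I)
        - ((c₃ : ℂ)/2 + (c₄ : ℂ)/4 * Complex.I) * (c ^ 2 + s ^ 2 + 1)) * h1
      + ((1/2)*s^3*Complex.I*(c₁:ℂ) + (-1/2)*s^3*Complex.I^2*(c₂:ℂ) + (1/2)*s^4*(c₃:ℂ)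
        + (1/4)*s^4*Complex.I*(c₄:ℂ) + (1/2)*s^4*Complex.I^2*(c₃:ℂ) + (-1/4)*s^4*Complex.I^3*(c₄:ℂ)
        + (1/2)*c*s^2*(c₁:ℂ) + (-3/2)*c*s^2*Complex.I*(c₂:ℂ) + (2)*c*s^3*Complex.I*(c₃:ℂ)
        + (-1)*c*s^3*Complex.I^2*(c₄:ℂ) + (-1)*c^2*s*(c₂:ℂ) + (2)*c^2*s^2*(c₃:ℂ)
        + (-3/2)*c^2*s^2*Complex.I*(c₄:ℂ) + (-1)*c^3*s*(c₄:ℂ)) * Complex.I_sq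
  have hdeg : P.natDegree < 5 := by
    have : P.natDegree ≤ 4 := by
      rw [hP]; compute_degree
    omega
  have hP0 : P = 0 :=
    eq_zero_of_natDegree_lt_card_of_eval_eq_zero P hzinj heval (by simpa using hdeg)
  have hcoeff : ∀ k, P.coeff k = 0 := by intro k; rw [hP0]; simp
  have h0 := hcoeff 0
  have h1 := hcoeff 1
  have h2 := hcoeff 2
  simp [hP, coeff_add, coeff_C_mul, coeff_X_pow, coeff_C, coeff_X, sub_mul, coeff_sub,
    mul_assoc] at h0 h1 h2
  simp [Complex.ext_iff] at h0 h1
  exact ⟨h2, h1.1, h1.2, h0.1, h0.2⟩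

/-- Quadratic version: if the pulled-back ellipse equation holds at 5 distinct circle
points, it holds on the whole circle. -/
lemma key (A B C D E F : ℝ) (p : Fin 5 → ℝ × ℝ)
    (hcirc : ∀ j, (p j).1 ^ 2 + (p j).2 ^ 2 = 1)
    (hinj : Function.Injective p)
    (hz : ∀ j, (A + B * (p j).1 + C * (p j).2) ^ 2 + (D + E * (p j).1 + F * (p j).2) ^ 2 = 1) :
    ∀ c s : ℝ, c ^ 2 + s ^ 2 = 1 →
      (A + B * c + C * s) ^ 2 + (D + E * c + F * s) ^ 2 = 1 := by
  obtain ⟨h0, h1, h2, h3, h4⟩ := trig5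
      (A ^ 2 + D ^ 2 + (B ^ 2 + C ^ 2 + E ^ 2 + F ^ 2) / 2 - 1)
      (2 * (A * B + D * E)) (2 * (A * C + D * F))
      ((B ^ 2 + E ^ 2 - C ^ 2 - F ^ 2) / 2) (2 * (B * C + E * F)) p hcirc hinj
      (fun j => by
        linear_combination hz j - ((B ^ 2 + C ^ 2 + E ^ 2 + F ^ 2) / 2) * hcirc j)
  intro c s hcs
  linear_combination h0 + c * h1 + s * h2 + (c ^ 2 - s ^ 2) * h3 + (c * s) * h4
    + ((B ^ 2 + C ^ 2 + E ^ 2 + F ^ 2) / 2) * hcs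

/-- Linear version: an affine function vanishing at 5 distinct circle points vanishes on
the whole circle. -/
lemma lin5 (A B C : ℝ) (p : Fin 5 → ℝ × ℝ)
    (hcirc : ∀ j, (p j).1 ^ 2 + (p j).2 ^ 2 = 1)
    (hinj : Function.Injective p)
    (hz : ∀ j, A + B * (p j).1 + C * (p j).2 = 0) :
    ∀ c s : ℝ, c ^ 2 + s ^ 2 = 1 → A + B * c + C * s = 0 := by
  obtain ⟨h0, h1, h2, -, -⟩ := trig5 A B C 0 0 p hcirc hinj
    (fun j => by linear_combination hz j)
  intro c s _
  rw [h0, h1, h2]; ring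

/-- Dual functionals to a linearly independent family in a real vector space. -/
lemma exists_dual {V : Type*} [AddCommGroup V] [Module ℝ V] {n : ℕ} {v : Fin n → V}
    (hv : LinearIndependent ℝ v) (i : Fin n) :
    ∃ f : V →ₗ[ℝ] ℝ, ∀ j, f (v j) = if j = i then 1 else 0 := by
  classical
  let b := Module.Basis.span hv
  obtain ⟨g, hg⟩ := LinearMap.exists_extend (b.coord i)
  refine ⟨g, fun j => ?_⟩
  have h1 : ((b j : Submodule.span ℝ (Set.range v)) : V) = v j := congrArg Subtype.val (Module.Basis.span_apply hv j)
  have h2 := LinearMap.congr_fun hg (b j)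
  simp only [LinearMap.comp_apply, Submodule.subtype_apply] at h2
  rw [← h1, h2, Module.Basis.coord_apply, Module.Basis.repr_self, Finsupp.single_apply]

lemma exists_angle (t₁ t₂ : ℝ) (h : t₁ ^ 2 + t₂ ^ 2 = 1) :
    ∃ β : ℝ, Real.cos β = t₁ ∧ Real.sin β = t₂ := by
  set z : ℂ := ⟨t₁, t₂⟩ with hz
  have habs : ‖z‖ = 1 := by
    rw [Complex.norm_def, Complex.normSq_mk]
    rw [show t₁ * t₁ + t₂ * t₂ = 1 by nlinarith]
    exact Real.sqrt_one
  have hz0 : z ≠ 0 := by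
    intro h0
    rw [h0] at habs; simp at habs
  refine ⟨Complex.arg z, ?_, ?_⟩
  · rw [Complex.cos_arg hz0, habs]; simp [hz]
  · rw [Complex.sin_arg, habs]; simp [hz]

/-- Main geometric lemma: if two ellipses share 5 points, the first is contained in
the second. -/
lemma ellipse_subset {V : Type*} [AddCommGroup V] [Module ℝ V] {a₁ u₁ u₂ a₂ v₁ v₂ : V}
    (hv : LinearIndependent ℝ ![v₁, v₂])
    (S : Finset V) (hcard : 5 ≤ S.card)
    (hS1 : ∀ x ∈ S, ∃ α : ℝ, x = a₁ + Real.cos α • u₁ + Real.sin α • u₂)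
    (hS2 : ∀ x ∈ S, ∃ α : ℝ, x = a₂ + Real.cos α • v₁ + Real.sin α • v₂) :
    {p : V | ∃ α : ℝ, p = a₁ + Real.cos α • u₁ + Real.sin α • u₂} ⊆
      {p : V | ∃ α : ℝ, p = a₂ + Real.cos α • v₁ + Real.sin α • v₂} := by
  classical
  obtain ⟨T, hTS, hT5⟩ := Finset.exists_subset_card_eq hcard
  set e : Fin 5 → V := fun j => (T.equivFin.symm (Fin.cast hT5.symm j) : V) with he
  have heinj : Function.Injective e := by
    intro j k h
    exact Fin.cast_injective hT5.symm (T.equivFin.symm.injective (Subtype.val_injective h))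
  have heS : ∀ j, e j ∈ S := fun j => hTS (T.equivFin.symm (Fin.cast hT5.symm j)).2
  choose θ hθ using fun j => hS1 _ (heS j)
  choose φ hφ using fun j => hS2 _ (heS j)
  set p : Fin 5 → ℝ × ℝ := fun j => (Real.cos (θ j), Real.sin (θ j)) with hp
  have hcirc : ∀ j, (p j).1 ^ 2 + (p j).2 ^ 2 = 1 := fun j => Real.cos_sq_add_sin_sq _
  have hpinj : Function.Injective p := by
    intro j k h
    apply heinj
    rw [hθ j, hθ k]
    have h1 : Real.cos (θ j) = Real.cos (θ k) := congrArg Prod.fst h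
    have h2 : Real.sin (θ j) = Real.sin (θ k) := congrArg Prod.snd h
    rw [h1, h2]
  -- dual functionals to v₁, v₂
  obtain ⟨f₁, hf₁⟩ := exists_dual hv 0
  obtain ⟨f₂, hf₂⟩ := exists_dual hv 1
  have hf₁₁ : f₁ v₁ = 1 := by simpa using hf₁ 0
  have hf₁₂ : f₁ v₂ = 0 := by simpa using hf₁ 1
  have hf₂₁ : f₂ v₁ = 0 := by simpa using hf₂ 0
  have hf₂₂ : f₂ v₂ = 1 := by simpa using hf₂ 1
  set A := f₁ (a₁ - a₂) with hA; set B := f₁ u₁ with hB; set C := f₁ u₂ with hC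
  set D := f₂ (a₁ - a₂) with hD; set E := f₂ u₁ with hE; set F := f₂ u₂ with hF
  have hEb : ∀ j, (A + B * (p j).1 + C * (p j).2) ^ 2
      + (D + E * (p j).1 + F * (p j).2) ^ 2 = 1 := by
    intro j
    have hd : e j - a₂ = (a₁ - a₂) + (p j).1 • u₁ + (p j).2 • u₂ := by
      rw [hθ j]; simp [hp]; abel
    have hd2 : e j - a₂ = Real.cos (φ j) • v₁ + Real.sin (φ j) • v₂ := by
      rw [hφ j]; abel
    have e₁ : A + B * (p j).1 + C * (p j).2 = Real.cos (φ j) := by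
      have h1 := congrArg f₁ hd
      have h2 := congrArg f₁ hd2
      simp only [map_add, map_smul, smul_eq_mul, hf₁₁, hf₁₂, mul_one, mul_zero,
        add_zero] at h1 h2
      rw [hA, hB, hC]
      simp only [hp]
      rw [← h2]
      linarith [h1]
    have e₂ : D + E * (p j).1 + F * (p j).2 = Real.sin (φ j) := by
      have h1 := congrArg f₂ hd
      have h2 := congrArg f₂ hd2
      simp only [map_add, map_smul, smul_eq_mul, hf₂₁, hf₂₂, mul_one, mul_zero,
        zero_add] at h1 h2
      rw [hD, hE, hF]
      simp only [hp]
      rw [← h2]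
      linarith [h1]
    rw [e₁, e₂]
    exact Real.cos_sq_add_sin_sq _
  have hQ := key A B C D E F p hcirc hpinj hEb
  -- now take an arbitrary point of E₁
  rintro x ⟨α, rfl⟩
  set c := Real.cos α; set s := Real.sin α
  set x := a₁ + c • u₁ + s • u₂ with hx
  have hxd : x - a₂ = (a₁ - a₂) + c • u₁ + s • u₂ := by rw [hx]; abel
  -- x - a₂ lies in the span of v₁, v₂
  have hmem : x - a₂ ∈ Submodule.span ℝ (Set.range ![v₁, v₂]) := by
    by_contra hw
    have hcons : LinearIndependent ℝ (Fin.cons (x - a₂) ![v₁, v₂]) :=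
      linearIndependent_fin_cons.2 ⟨hv, hw⟩
    obtain ⟨g, hg⟩ := exists_dual hcons 0
    have hgw : g (x - a₂) = 1 := by simpa using hg 0
    have hgv₁ : g v₁ = 0 := by simpa using hg 1
    have hgv₂ : g v₂ = 0 := by simpa using hg 2
    have hz : ∀ j, g (a₁ - a₂) + g u₁ * (p j).1 + g u₂ * (p j).2 = 0 := by
      intro j
      have hd : e j - a₂ = (a₁ - a₂) + (p j).1 • u₁ + (p j).2 • u₂ := by
        rw [hθ j]; simp [hp]; abel
      have hd2 : e j - a₂ = Real.cos (φ j) • v₁ + Real.sin (φ j) • v₂ := by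
        rw [hφ j]; abel
      have h1 := congrArg g hd
      rw [hd2] at h1
      simp only [map_add, map_smul, smul_eq_mul, hgv₁, hgv₂, mul_zero, add_zero] at h1
      linarith [h1]
    have := lin5 _ _ _ p hcirc hpinj hz c s (Real.cos_sq_add_sin_sq α)
    have hgx : g (x - a₂) = 0 := by
      rw [hxd]
      simp only [map_add, map_smul, smul_eq_mul]
      linarith [this]
    rw [hgw] at hgx
    exact one_ne_zero hgx
  rw [Submodule.mem_span_range_iff_exists_fun] at hmem
  obtain ⟨t, ht⟩ := hmem
  rw [Fin.sum_univ_two] at ht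
  simp only [Matrix.cons_val_zero, Matrix.cons_val_one, Matrix.head_cons] at ht
  have ht₁ : t 0 = A + B * c + C * s := by
    have := congrArg f₁ ht
    rw [hxd] at this
    simp only [map_add, map_smul, smul_eq_mul, hf₁₁, hf₁₂, mul_one, mul_zero,
      add_zero] at this
    rw [hA, hB, hC]
    linarith [this]
  have ht₂ : t 1 = D + E * c + F * s := by
    have := congrArg f₂ ht
    rw [hxd] at this
    simp only [map_add, map_smul, smul_eq_mul, hf₂₁, hf₂₂, mul_one, mul_zero,
      add_zero] at this
    rw [hD, hE, hF]
    linarith [this]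
  have hunit : (t 0) ^ 2 + (t 1) ^ 2 = 1 := by
    rw [ht₁, ht₂]
    exact hQ c s (Real.cos_sq_add_sin_sq α)
  obtain ⟨β, hβc, hβs⟩ := exists_angle _ _ hunit
  refine ⟨β, ?_⟩
  rw [hβc, hβs, add_assoc, ht]
  abel



/-- An ellipse in a real vector space: the set `{a + cos α • v₁ + sin α • v₂}` with
`v₁, v₂` linearly independent. -/
def IsEllipse {V : Type*} [AddCommGroup V] [Module ℝ V] (E : Set V) : Prop :=
  ∃ (a v₁ v₂ : V), LinearIndependent ℝ ![v₁, v₂] ∧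
    E = {p | ∃ α : ℝ, p = a + Real.cos α • v₁ + Real.sin α • v₂}

/-- in a real normed vector space, two ellipses that coincide in at least
5 points are equal. -/
theorem stmt8 {V : Type*} [NormedAddCommGroup V] [NormedSpace ℝ V]
    (E₁ E₂ : Set V) (h₁ : IsEllipse E₁) (h₂ : IsEllipse E₂)
    (S : Finset V) (hS : (S : Set V) ⊆ E₁ ∩ E₂) (hcard : 5 ≤ S.card) :
    E₁ = E₂ := by
  obtain ⟨a₁, u₁, u₂, hu, rfl⟩ := h₁
  obtain ⟨a₂, v₁, v₂, hv, rfl⟩ := h₂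
  have hS1 : ∀ x ∈ S, ∃ α : ℝ, x = a₁ + Real.cos α • u₁ + Real.sin α • u₂ :=
    fun x hx => (hS hx).1
  have hS2 : ∀ x ∈ S, ∃ α : ℝ, x = a₂ + Real.cos α • v₁ + Real.sin α • v₂ :=
    fun x hx => (hS hx).2
  exact Set.Subset.antisymm (ellipse_subset hv S hcard hS1 hS2)
    (ellipse_subset hu S hcard hS2 hS1)
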